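/- There exists a constant C, depending only on D and N, such that for all V, W ∈ ℝ^{D×D}, the map F_{V,W} : ℝ^{D×(N+1)} → ℝ^{D×(N+1)}, F_{V,W}(Z) = V·Z·softmax(ZᵀWZ), is differentiable at every Z, and its Fréchet derivative (as a linear operator on ℝ^{D×(N+1)} equipped with the Frobenius norm) has operator norm at most C·(1+‖Z‖_F²)²·(1+‖θ‖+‖θ‖²), where ‖θ‖ = √(‖V‖_F² + ‖W‖_F²). -/

import Mathlib

open Matrix

noncomputable section

/-- `D × (N+1)` real matrices with the Frobenius (Euclidean) norm. -/
abbrev Mat (D N : ℕ) : Type := EuclideanSpace ℝ (Fin D × Fin (N + 1))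

/-- Column-wise softmax of a matrix. -/
noncomputable def softmaxCol {n m : ℕ} (A : Matrix (Fin n) (Fin m) ℝ) :
    Matrix (Fin n) (Fin m) ℝ :=
  Matrix.of fun i j => Real.exp (A i j) / ∑ k, Real.exp (A k j)

/-- Frobenius norm of a matrix. -/
noncomputable def frobM {n m : ℕ} (Z : Matrix (Fin n) (Fin m) ℝ) : ℝ :=
  Real.sqrt (∑ i, ∑ j, Z i j ^ 2)

/-- View a Euclidean element as a matrix. -/
noncomputable def toMat {D N : ℕ} (Z : Mat D N) : Matrix (Fin D) (Fin (N + 1)) ℝ :=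
  Matrix.of fun i j => Z (i, j)

/-- View a matrix as a Euclidean element. -/
noncomputable def ofMat {D N : ℕ} (A : Matrix (Fin D) (Fin (N + 1)) ℝ) : Mat D N :=
  (WithLp.equiv 2 (Fin D × Fin (N + 1) → ℝ)).symm fun q => A q.1 q.2

/-- The softmax self-attention encoder `Z ↦ V Z softmax(Zᵀ W Z)`, as a map on Euclidean space
(so that `‖·‖` is the Frobenius norm and operator norms of Fréchet derivatives are ℓ²-ℓ²
operator norms). -/
noncomputable def attnF {D N : ℕ} (V W : Matrix (Fin D) (Fin D) ℝ) (Z : Mat D N) : Mat D N :=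
  ofMat (V * toMat Z * softmaxCol ((toMat Z)ᵀ * W * toMat Z))

abbrev ES (n m : ℕ) : Type := EuclideanSpace ℝ (Fin n × Fin m)

noncomputable def oM {n m : ℕ} (A : Matrix (Fin n) (Fin m) ℝ) : ES n m :=
  (WithLp.equiv 2 (Fin n × Fin m → ℝ)).symm fun q => A q.1 q.2

noncomputable def tM {n m : ℕ} (Z : ES n m) : Matrix (Fin n) (Fin m) ℝ :=
  Matrix.of fun i j => Z (i, j)

@[simp] lemma oM_apply {n m : ℕ} (A : Matrix (Fin n) (Fin m) ℝ) (q) : oM A q = A q.1 q.2 := rfl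
@[simp] lemma tM_apply {n m : ℕ} (Z : ES n m) (i j) : tM Z i j = Z (i, j) := rfl
@[simp] lemma tM_oM {n m : ℕ} (A : Matrix (Fin n) (Fin m) ℝ) : tM (oM A) = A := rfl
@[simp] lemma oM_tM {n m : ℕ} (Z : ES n m) : oM (tM Z) = Z := rfl

lemma tM_add {n m : ℕ} (X Y : ES n m) : tM (X + Y) = tM X + tM Y := by
  ext i j; simp [tM]

lemma tM_smul {n m : ℕ} (c : ℝ) (X : ES n m) : tM (c • X) = c • tM X := by
  ext i j; simp [tM]

lemma oM_add {n m : ℕ} (A B : Matrix (Fin n) (Fin m) ℝ) : oM (A + B) = oM A + oM B := by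
  ext q; simp [oM]

lemma oM_smul {n m : ℕ} (c : ℝ) (A : Matrix (Fin n) (Fin m) ℝ) : oM (c • A) = c • oM A := by
  ext q; simp [oM]

lemma norm_oM {n m : ℕ} (A : Matrix (Fin n) (Fin m) ℝ) : ‖oM A‖ = frobM A := by
  rw [EuclideanSpace.norm_eq, frobM]
  congr 1
  rw [Fintype.sum_prod_type]
  exact Finset.sum_congr rfl fun i _ => Finset.sum_congr rfl fun j _ => by
    rw [Real.norm_eq_abs, sq_abs]; rfl

lemma norm_eq_frobM_tM {n m : ℕ} (Z : ES n m) : ‖Z‖ = frobM (tM Z) := by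
  rw [← norm_oM, oM_tM]

lemma frobM_nonneg {n m : ℕ} (A : Matrix (Fin n) (Fin m) ℝ) : 0 ≤ frobM A :=
  Real.sqrt_nonneg _

lemma abs_coord_le_norm {n m : ℕ} (Z : ES n m) (q : Fin n × Fin m) : |Z q| ≤ ‖Z‖ := by
  rw [EuclideanSpace.norm_eq, ← Real.sqrt_sq_eq_abs]
  apply Real.sqrt_le_sqrt
  refine Finset.single_le_sum (f := fun i => ‖Z i‖ ^ 2) (fun i _ => by positivity) (Finset.mem_univ q) |>.trans_eq' ?_
  rw [Real.norm_eq_abs, sq_abs]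

lemma frobM_transpose {n m : ℕ} (A : Matrix (Fin n) (Fin m) ℝ) : frobM Aᵀ = frobM A := by
  rw [frobM, frobM, Finset.sum_comm]
  rfl

lemma frobM_mul_le {n m p : ℕ} (A : Matrix (Fin n) (Fin m) ℝ) (B : Matrix (Fin m) (Fin p) ℝ) :
    frobM (A * B) ≤ frobM A * frobM B := by
  rw [frobM, frobM, frobM, ← Real.sqrt_mul (by positivity)]
  apply Real.sqrt_le_sqrt
  calc ∑ i, ∑ j, (A * B) i j ^ 2
      ≤ ∑ i, ∑ j, (∑ k, A i k ^ 2) * (∑ k, B k j ^ 2) := by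
        refine Finset.sum_le_sum fun i _ => Finset.sum_le_sum fun j _ => ?_
        rw [Matrix.mul_apply]
        exact Finset.sum_mul_sq_le_sq_mul_sq _ _ _
    _ = (∑ i, ∑ k, A i k ^ 2) * (∑ k, ∑ j, B k j ^ 2) := by
        rw [Finset.sum_mul_sum]
        refine Finset.sum_congr rfl fun i _ => ?_
        rw [← Finset.mul_sum, ← Finset.mul_sum]
        congr 1
        exact Finset.sum_comm

lemma den_pos {N m : ℕ} (A : Matrix (Fin (N + 1)) (Fin m) ℝ) (j : Fin m) :
    0 < ∑ k, Real.exp (A k j) :=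
  Finset.sum_pos (fun k _ => Real.exp_pos _) ⟨0, Finset.mem_univ 0⟩

lemma softmax_nonneg {N m : ℕ} (A : Matrix (Fin (N + 1)) (Fin m) ℝ) (i : Fin (N + 1)) (j : Fin m) :
    0 ≤ softmaxCol A i j :=
  div_nonneg (Real.exp_pos _).le (den_pos A j).le

lemma softmax_le_one {N m : ℕ} (A : Matrix (Fin (N + 1)) (Fin m) ℝ) (i : Fin (N + 1)) (j : Fin m) :
    softmaxCol A i j ≤ 1 := by
  rw [softmaxCol, Matrix.of_apply, div_le_one (den_pos A j)]
  exact Finset.single_le_sum (f := fun k => Real.exp (A k j))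
    (fun k _ => (Real.exp_pos _).le) (Finset.mem_univ i)

lemma frobM_le_of_entries {n m : ℕ} (M : Matrix (Fin n) (Fin m) ℝ) (c : ℝ) (hc : 0 ≤ c)
    (h : ∀ i j, |M i j| ≤ c) : frobM M ≤ Real.sqrt (n * m) * c := by
  rw [frobM, ← Real.sqrt_sq hc, ← Real.sqrt_mul (by positivity)]
  apply Real.sqrt_le_sqrt
  calc ∑ i, ∑ j, M i j ^ 2 ≤ ∑ _i : Fin n, ∑ _j : Fin m, c ^ 2 := by
        refine Finset.sum_le_sum fun i _ => Finset.sum_le_sum fun j _ => ?_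
        have := h i j
        have h2 := abs_le.mp this
        nlinarith [h2.1, h2.2]
    _ = n * m * c ^ 2 := by
        simp [Finset.sum_const]
        ring
  
lemma frobM_le_of_entries' {N : ℕ} (M : Matrix (Fin (N + 1)) (Fin (N + 1)) ℝ) (c : ℝ) (hc : 0 ≤ c)
    (h : ∀ i j, |M i j| ≤ c) : frobM M ≤ ((N : ℝ) + 1) * c := by
  have := frobM_le_of_entries M c hc h
  have hs : Real.sqrt (((N + 1 : ℕ) : ℝ) * ((N + 1 : ℕ) : ℝ)) = (N : ℝ) + 1 := by
    rw [Real.sqrt_mul_self (by positivity)]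
    push_cast; ring
  rw [hs] at this
  exact this

lemma frobM_softmax_le {N : ℕ} (A : Matrix (Fin (N + 1)) (Fin (N + 1)) ℝ) :
    frobM (softmaxCol A) ≤ (N : ℝ) + 1 := by
  have := frobM_le_of_entries' (softmaxCol A) 1 zero_le_one fun i j => by
    rw [abs_le]
    exact ⟨by linarith [softmax_nonneg A i j], softmax_le_one A i j⟩
  simpa using this

noncomputable def smaxE {N : ℕ} (X : ES (N + 1) (N + 1)) : ES (N + 1) (N + 1) :=
  oM (softmaxCol (tM X))

noncomputable def dsM {N : ℕ} (X B : ES (N + 1) (N + 1)) :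
    Matrix (Fin (N + 1)) (Fin (N + 1)) ℝ :=
  Matrix.of fun i j =>
    softmaxCol (tM X) i j * (B (i, j) - ∑ k, softmaxCol (tM X) k j * B (k, j))

noncomputable def dsL {N : ℕ} (X : ES (N + 1) (N + 1)) :
    ES (N + 1) (N + 1) →ₗ[ℝ] ES (N + 1) (N + 1) where
  toFun B := oM (dsM X B)
  map_add' B C := by
    ext q
    simp only [dsM, oM_apply, Matrix.of_apply, PiLp.add_apply, mul_add,
      Finset.sum_add_distrib]
    ring
  map_smul' c B := by
    ext q
    simp only [dsM, oM_apply, Matrix.of_apply, PiLp.smul_apply, smul_eq_mul,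
      RingHom.id_apply]
    rw [show ∑ k, softmaxCol (tM X) k q.2 * (c * B (k, q.2))
        = c * ∑ k, softmaxCol (tM X) k q.2 * B (k, q.2) by
      rw [Finset.mul_sum]; exact Finset.sum_congr rfl fun k _ => by ring]
    ring

noncomputable def dsC {N : ℕ} (X : ES (N + 1) (N + 1)) :
    ES (N + 1) (N + 1) →L[ℝ] ES (N + 1) (N + 1) :=
  LinearMap.toContinuousLinearMap (dsL X)

lemma dsC_eq {N : ℕ} (X B : ES (N + 1) (N + 1)) : dsC X B = oM (dsM X B) := by
  simp [dsC, dsL]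

lemma norm_dsC_apply_le {N : ℕ} (X B : ES (N + 1) (N + 1)) :
    ‖dsC X B‖ ≤ ((N : ℝ) + 1) * (((N : ℝ) + 2) * ‖B‖) := by
  have hB : (0:ℝ) ≤ ‖B‖ := norm_nonneg _
  have hco : ∀ q, |B q| ≤ ‖B‖ := abs_coord_le_norm B
  rw [dsC_eq, norm_oM]
  refine frobM_le_of_entries' _ _ (by positivity) fun i j => ?_
  rw [dsM, Matrix.of_apply, abs_mul]
  have h1 : |softmaxCol (tM X) i j| ≤ 1 := by
    rw [abs_le]
    exact ⟨by linarith [softmax_nonneg (tM X) i j], softmax_le_one (tM X) i j⟩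
  have h2 : |B (i, j) - ∑ k, softmaxCol (tM X) k j * B (k, j)| ≤ ((N : ℝ) + 2) * ‖B‖ := by
    refine (abs_sub _ _).trans ?_
    have h3 : |∑ k, softmaxCol (tM X) k j * B (k, j)| ≤ ((N : ℝ) + 1) * ‖B‖ := by
      refine (Finset.abs_sum_le_sum_abs _ _).trans ?_
      calc ∑ k, |softmaxCol (tM X) k j * B (k, j)| ≤ ∑ _k : Fin (N + 1), ‖B‖ := by
            refine Finset.sum_le_sum fun k _ => ?_
            rw [abs_mul]
            have ha : |softmaxCol (tM X) k j| ≤ 1 := by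
              rw [abs_le]
              exact ⟨by linarith [softmax_nonneg (tM X) k j], softmax_le_one (tM X) k j⟩
            calc |softmaxCol (tM X) k j| * |B (k, j)| ≤ 1 * ‖B‖ :=
                  mul_le_mul ha (hco _) (abs_nonneg _) zero_le_one
              _ = ‖B‖ := one_mul _
        _ = ((N : ℝ) + 1) * ‖B‖ := by
            rw [Finset.sum_const]
            simp [nsmul_eq_mul]
    have := hco (i, j)
    linarith
  calc |softmaxCol (tM X) i j| * |B (i, j) - ∑ k, softmaxCol (tM X) k j * B (k, j)|
      ≤ 1 * (((N : ℝ) + 2) * ‖B‖) := mul_le_mul h1 h2 (abs_nonneg _) zero_le_one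
    _ = ((N : ℝ) + 2) * ‖B‖ := one_mul _

set_option maxHeartbeats 1000000 in
lemma hasFDerivAt_smaxE {N : ℕ} (X : ES (N + 1) (N + 1)) :
    HasFDerivAt smaxE (dsC X) X := by
  set e := EuclideanSpace.equiv (Fin (N + 1) × Fin (N + 1)) ℝ with he
  have key : HasFDerivAt (fun Y => e (smaxE Y))
      ((e : ES (N + 1) (N + 1) →L[ℝ] (Fin (N + 1) × Fin (N + 1) → ℝ)).comp (dsC X)) X := by
    apply hasFDerivAt_pi''
    rintro ⟨i, j⟩
    set d : ℝ := ∑ k, Real.exp (X (k, j)) with hd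
    have hdpos : 0 < d := Finset.sum_pos (fun k _ => Real.exp_pos _) ⟨0, Finset.mem_univ 0⟩
    have hdne : d ≠ 0 := ne_of_gt hdpos
    have hnum : HasFDerivAt (fun Y : ES (N + 1) (N + 1) => Real.exp (Y (i, j)))
        (Real.exp (X (i, j)) • (EuclideanSpace.proj (i, j) : ES (N + 1) (N + 1) →L[ℝ] ℝ)) X :=
      by have := (Real.hasDerivAt_exp (X (i, j))).comp_hasFDerivAt X
            (EuclideanSpace.proj (i, j) : ES (N + 1) (N + 1) →L[ℝ] ℝ).hasFDerivAt
         exact this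
    have hden : HasFDerivAt (fun Y : ES (N + 1) (N + 1) => ∑ k, Real.exp (Y (k, j)))
        (∑ k, Real.exp (X (k, j)) • (EuclideanSpace.proj (k, j) : ES (N + 1) (N + 1) →L[ℝ] ℝ)) X := by
      apply HasFDerivAt.fun_sum
      intro k _
      have := (Real.hasDerivAt_exp (X (k, j))).comp_hasFDerivAt X
        (EuclideanSpace.proj (k, j) : ES (N + 1) (N + 1) →L[ℝ] ℝ).hasFDerivAt
      exact this
    have hinv : HasDerivAt (fun y : ℝ => y⁻¹) (-(d ^ 2)⁻¹) d := hasDerivAt_inv hdne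
    have hiden := hinv.comp_hasFDerivAt X hden
    have hprod := hnum.mul hiden
    have heq : (fun Y : ES (N + 1) (N + 1) => e (smaxE Y) (i, j)) =ᶠ[nhds X]
        (fun Y => Real.exp (Y (i, j)) * (∑ k, Real.exp (Y (k, j)))⁻¹) :=
      Filter.Eventually.of_forall fun Y => by
        show softmaxCol (tM Y) i j = _
        rw [softmaxCol, Matrix.of_apply, div_eq_mul_inv]
        rfl
    have hgoal := (hprod.congr_of_eventuallyEq heq)
    refine hgoal.congr_fderiv (Eq.symm ?_)
    ext B
    simp only [ContinuousLinearMap.coe_comp', Function.comp_apply,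
      ContinuousLinearMap.proj_apply, ContinuousLinearMap.add_apply,
      ContinuousLinearMap.smul_apply, ContinuousLinearMap.coe_sum',
      Finset.sum_apply, PiLp.proj_apply, smul_eq_mul]
    rw [dsC_eq]
    change dsM X B i j = _
    rw [dsM, Matrix.of_apply]
    have hsm : ∀ k, softmaxCol (tM X) k j = Real.exp (X (k, j)) / d := fun k => rfl
    simp only [hsm]
    rw [show ∑ k, Real.exp (X (k, j)) / d * B (k, j) = (∑ k, Real.exp (X (k, j)) * B (k, j)) / d by
      rw [Finset.sum_div]; exact Finset.sum_congr rfl fun k _ => by ring]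
    field_simp
    ring
  have := (e.comp_hasFDerivAt_iff (f := smaxE) (x := X) (f' := dsC X)).mp key
  exact this

variable {D N : ℕ}

noncomputable def linV (V : Matrix (Fin D) (Fin D) ℝ) : ES D (N + 1) →L[ℝ] ES D (N + 1) :=
  LinearMap.toContinuousLinearMap
    { toFun := fun Z => oM (V * tM Z)
      map_add' := fun X Y => by
        show oM (V * tM (X + Y)) = oM (V * tM X) + oM (V * tM Y)
        rw [tM_add, Matrix.mul_add, oM_add]
      map_smul' := fun c X => by
        show oM (V * tM (c • X)) = c • oM (V * tM X)
        rw [tM_smul, Matrix.mul_smul, oM_smul] }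

lemma linV_eq (V : Matrix (Fin D) (Fin D) ℝ) (Z : ES D (N + 1)) :
    linV V Z = oM (V * tM Z) := by
  simp [linV]

noncomputable def qbilL (W : Matrix (Fin D) (Fin D) ℝ) (X : ES D (N + 1)) :
    ES D (N + 1) →ₗ[ℝ] ES (N + 1) (N + 1) where
  toFun Y := oM ((tM X)ᵀ * W * tM Y)
  map_add' Y Y' := by
    show oM ((tM X)ᵀ * W * tM (Y + Y')) = oM ((tM X)ᵀ * W * tM Y) + oM ((tM X)ᵀ * W * tM Y')
    rw [tM_add, Matrix.mul_add, oM_add]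
  map_smul' c Y := by
    show oM ((tM X)ᵀ * W * tM (c • Y)) = c • oM ((tM X)ᵀ * W * tM Y)
    rw [tM_smul, Matrix.mul_smul, oM_smul]

noncomputable def qbil (W : Matrix (Fin D) (Fin D) ℝ) :
    ES D (N + 1) →L[ℝ] ES D (N + 1) →L[ℝ] ES (N + 1) (N + 1) :=
  LinearMap.toContinuousLinearMap
    { toFun := fun X => LinearMap.toContinuousLinearMap (qbilL W X)
      map_add' := fun X X' => by
        ext Y
        simp only [qbilL, LinearMap.coe_toContinuousLinearMap', LinearMap.coe_mk,
          AddHom.coe_mk, ContinuousLinearMap.add_apply]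
        rw [tM_add, Matrix.transpose_add, Matrix.add_mul, Matrix.add_mul, oM_add]
      map_smul' := fun c X => by
        ext Y
        simp only [qbilL, LinearMap.coe_toContinuousLinearMap', LinearMap.coe_mk,
          AddHom.coe_mk, RingHom.id_apply, ContinuousLinearMap.smul_apply]
        rw [tM_smul, Matrix.transpose_smul, Matrix.smul_mul, Matrix.smul_mul, oM_smul] }

lemma qbil_eq (W : Matrix (Fin D) (Fin D) ℝ) (X Y : ES D (N + 1)) :
    qbil W X Y = oM ((tM X)ᵀ * W * tM Y) := by
  simp [qbil, qbilL]

noncomputable def mulBL (X : ES D (N + 1)) :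
    ES (N + 1) (N + 1) →ₗ[ℝ] ES D (N + 1) where
  toFun Y := oM (tM X * tM Y)
  map_add' Y Y' := by
    show oM (tM X * tM (Y + Y')) = oM (tM X * tM Y) + oM (tM X * tM Y')
    rw [tM_add, Matrix.mul_add, oM_add]
  map_smul' c Y := by
    show oM (tM X * tM (c • Y)) = c • oM (tM X * tM Y)
    rw [tM_smul, Matrix.mul_smul, oM_smul]

noncomputable def mulB : ES D (N + 1) →L[ℝ] ES (N + 1) (N + 1) →L[ℝ] ES D (N + 1) :=
  LinearMap.toContinuousLinearMap
    { toFun := fun X => LinearMap.toContinuousLinearMap (mulBL X)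
      map_add' := fun X X' => by
        ext Y
        simp only [mulBL, LinearMap.coe_toContinuousLinearMap', LinearMap.coe_mk,
          AddHom.coe_mk, ContinuousLinearMap.add_apply]
        rw [tM_add, Matrix.add_mul, oM_add]
      map_smul' := fun c X => by
        ext Y
        simp only [mulBL, LinearMap.coe_toContinuousLinearMap', LinearMap.coe_mk,
          AddHom.coe_mk, RingHom.id_apply, ContinuousLinearMap.smul_apply]
        rw [tM_smul, Matrix.smul_mul, oM_smul] }

lemma mulB_eq (X : ES D (N + 1)) (Y : ES (N + 1) (N + 1)) :
    mulB X Y = oM (tM X * tM Y) := by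
  simp [mulB, mulBL]

lemma norm_mulB_le (X : ES D (N + 1)) (Y : ES (N + 1) (N + 1)) :
    ‖mulB X Y‖ ≤ ‖X‖ * ‖Y‖ := by
  rw [mulB_eq, norm_oM, norm_eq_frobM_tM X, norm_eq_frobM_tM Y]
  exact frobM_mul_le _ _

lemma norm_linV_le (V : Matrix (Fin D) (Fin D) ℝ) (Z : ES D (N + 1)) :
    ‖linV V Z‖ ≤ frobM V * ‖Z‖ := by
  rw [linV_eq, norm_oM, norm_eq_frobM_tM Z]
  exact frobM_mul_le _ _

lemma norm_qbil_le (W : Matrix (Fin D) (Fin D) ℝ) (X Y : ES D (N + 1)) :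
    ‖qbil W X Y‖ ≤ frobM W * ‖X‖ * ‖Y‖ := by
  rw [qbil_eq, norm_oM, norm_eq_frobM_tM X, norm_eq_frobM_tM Y]
  calc frobM ((tM X)ᵀ * W * tM Y) ≤ frobM ((tM X)ᵀ * W) * frobM (tM Y) := frobM_mul_le _ _
    _ ≤ frobM (tM X)ᵀ * frobM W * frobM (tM Y) := by
        have h := frobM_mul_le (tM X)ᵀ W
        have := frobM_nonneg (tM Y)
        nlinarith
    _ = frobM W * frobM (tM X) * frobM (tM Y) := by rw [frobM_transpose]; ring

lemma norm_smaxE_le (X : ES (N + 1) (N + 1)) : ‖smaxE X‖ ≤ (N : ℝ) + 1 := by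
  rw [smaxE, norm_oM]
  exact frobM_softmax_le _

noncomputable def attnD (V W : Matrix (Fin D) (Fin D) ℝ) (Z : ES D (N + 1)) :
    ES D (N + 1) →L[ℝ] ES D (N + 1) :=
  ((mulB (D := D) (N := N)).isBoundedBilinearMap.deriv (linV V Z, smaxE (qbil W Z Z))).comp
    ((linV V).prod ((dsC (qbil W Z Z)).comp
      (((qbil (N := N) W).isBoundedBilinearMap.deriv (Z, Z)).comp
        ((ContinuousLinearMap.id ℝ (ES D (N + 1))).prod
          (ContinuousLinearMap.id ℝ (ES D (N + 1)))))))

lemma attn_hasFDerivAt (V W : Matrix (Fin D) (Fin D) ℝ) (Z : Mat D N) :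
    HasFDerivAt (attnF V W) (attnD V W Z) Z := by
  have hdiag : HasFDerivAt (fun Y : ES D (N + 1) => (Y, Y))
      ((ContinuousLinearMap.id ℝ (ES D (N + 1))).prod
        (ContinuousLinearMap.id ℝ (ES D (N + 1)))) Z :=
    (hasFDerivAt_id Z).prodMk (hasFDerivAt_id Z)
  have hq := HasFDerivAt.comp (f := fun Y : ES D (N + 1) => (Y, Y)) Z ((qbil (N := N) W).isBoundedBilinearMap.hasFDerivAt (Z, Z)) hdiag
  have hs := HasFDerivAt.comp (f := (fun x : ES D (N + 1) × ES D (N + 1) => qbil W x.1 x.2) ∘ fun Y : ES D (N + 1) => (Y, Y)) Z (hasFDerivAt_smaxE (qbil W Z Z)) hq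
  have hlin : HasFDerivAt (fun Y : ES D (N + 1) => linV (N := N) V Y) (linV V) Z :=
    (linV V).hasFDerivAt
  have hpair := hlin.prodMk hs
  have hmul := HasFDerivAt.comp Z ((mulB (D := D) (N := N)).isBoundedBilinearMap.hasFDerivAt
      (linV V Z, smaxE (qbil W Z Z))) hpair
  refine hmul.congr_of_eventuallyEq (Filter.Eventually.of_forall fun Y => ?_)
  show attnF V W Y = mulB (linV V Y) (smaxE (qbil W Y Y))
  rw [attnF, linV_eq, qbil_eq, mulB_eq, smaxE]
  rfl

lemma attnD_apply (V W : Matrix (Fin D) (Fin D) ℝ) (Z H : ES D (N + 1)) :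
    attnD V W Z H = mulB (linV V Z) (dsC (qbil W Z Z) (qbil W Z H + qbil W H Z))
      + mulB (linV V H) (smaxE (qbil W Z Z)) := by
  simp only [attnD, ContinuousLinearMap.comp_apply, ContinuousLinearMap.prod_apply,
    IsBoundedBilinearMap.deriv_apply, ContinuousLinearMap.id_apply]

lemma attnD_norm_apply_le (V W : Matrix (Fin D) (Fin D) ℝ) (Z H : ES D (N + 1)) :
    ‖attnD V W Z H‖ ≤
      (((N : ℝ) + 1) * frobM V
        + 2 * ((N : ℝ) + 1) * ((N : ℝ) + 2) * frobM V * frobM W * ‖Z‖ ^ 2) * ‖H‖ := by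
  have hfV := frobM_nonneg V
  have hfW := frobM_nonneg W
  have hZ : (0:ℝ) ≤ ‖Z‖ := norm_nonneg _
  have hH : (0:ℝ) ≤ ‖H‖ := norm_nonneg _
  have hN : (0:ℝ) ≤ (N : ℝ) := Nat.cast_nonneg N
  rw [attnD_apply]
  refine (norm_add_le _ _).trans ?_
  have t1 : ‖mulB (linV V Z) (dsC (qbil W Z Z) (qbil W Z H + qbil W H Z))‖ ≤
      (frobM V * ‖Z‖) * (((N : ℝ) + 1) * (((N : ℝ) + 2) * (2 * (frobM W * ‖Z‖ * ‖H‖)))) := by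
    refine (norm_mulB_le _ _).trans ?_
    have h1 := norm_linV_le V Z
    have h2 : ‖dsC (qbil W Z Z) (qbil W Z H + qbil W H Z)‖ ≤
        ((N : ℝ) + 1) * (((N : ℝ) + 2) * (2 * (frobM W * ‖Z‖ * ‖H‖))) := by
      refine (norm_dsC_apply_le _ _).trans ?_
      have h3 : ‖qbil W Z H + qbil W H Z‖ ≤ 2 * (frobM W * ‖Z‖ * ‖H‖) := by
        refine (norm_add_le _ _).trans ?_
        have h4 := norm_qbil_le W Z H
        have h5 := norm_qbil_le W H Z
        nlinarith
      gcongr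
    exact mul_le_mul h1 h2 (norm_nonneg _) (by positivity)
  have t2 : ‖mulB (linV V H) (smaxE (qbil W Z Z))‖ ≤ (frobM V * ‖H‖) * ((N : ℝ) + 1) := by
    refine (norm_mulB_le _ _).trans ?_
    have h1 := norm_linV_le V H
    have h2 := norm_smaxE_le (qbil W Z Z)
    exact mul_le_mul h1 h2 (norm_nonneg _) (by positivity)
  nlinarith


set_option maxHeartbeats 1000000 in
/-- differentiability and Jacobian operator-norm growth bound (condition (G3))
for the softmax self-attention encoder. -/
theorem stmt18 (D N : ℕ) :
    ∃ C : ℝ, 0 < C ∧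
      ∀ V W : Matrix (Fin D) (Fin D) ℝ,
        Differentiable ℝ (attnF (D := D) (N := N) V W) ∧
        ∀ Z : Mat D N,
          ‖fderiv ℝ (attnF V W) Z‖ ≤
            C * (1 + ‖Z‖ ^ 2) ^ 2 *
              (1 + Real.sqrt (frobM V ^ 2 + frobM W ^ 2) +
                Real.sqrt (frobM V ^ 2 + frobM W ^ 2) ^ 2) := by
  refine ⟨3 * (((N : ℝ) + 1) * ((N : ℝ) + 2)) + 1, by positivity, fun V W => ?_⟩
  constructor
  · exact fun Z => (attn_hasFDerivAt V W Z).differentiableAt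
  · intro Z
    rw [(attn_hasFDerivAt V W Z).fderiv]
    have hfV := frobM_nonneg V
    have hfW := frobM_nonneg W
    set t := Real.sqrt (frobM V ^ 2 + frobM W ^ 2) with ht
    have ht0 : 0 ≤ t := Real.sqrt_nonneg _
    have hV : frobM V ≤ t := by
      have h := Real.sqrt_le_sqrt (show frobM V ^ 2 ≤ frobM V ^ 2 + frobM W ^ 2 by nlinarith)
      rwa [Real.sqrt_sq hfV] at h
    have hW : frobM W ≤ t := by
      have h := Real.sqrt_le_sqrt (show frobM W ^ 2 ≤ frobM V ^ 2 + frobM W ^ 2 by nlinarith)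
      rwa [Real.sqrt_sq hfW] at h
    have hZ : (0:ℝ) ≤ ‖Z‖ := norm_nonneg _
    have hN : (0:ℝ) ≤ (N : ℝ) := Nat.cast_nonneg N
    refine ContinuousLinearMap.opNorm_le_bound _ (by positivity) fun H => ?_
    refine (attnD_norm_apply_le V W Z H).trans ?_
    have hH : (0:ℝ) ≤ ‖H‖ := norm_nonneg _
    refine mul_le_mul_of_nonneg_right ?_ hH
    set K : ℝ := ((N : ℝ) + 1) * ((N : ℝ) + 2) with hK
    set P : ℝ := (1 + ‖Z‖ ^ 2) ^ 2 with hP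
    set Q : ℝ := 1 + t + t ^ 2 with hQdef
    have hK0 : (0:ℝ) < K := by rw [hK]; positivity
    have hP1 : (1:ℝ) ≤ P := by rw [hP]; nlinarith
    have hPz : ‖Z‖ ^ 2 ≤ P := by rw [hP]; nlinarith
    have hQ1 : (1:ℝ) ≤ Q := by rw [hQdef]; nlinarith
    have hQt : t ≤ Q := by rw [hQdef]; nlinarith
    have hQt2 : t ^ 2 ≤ Q := by rw [hQdef]; nlinarith
    have hP0 : (0:ℝ) < P := lt_of_lt_of_le one_pos hP1
    have hQ0 : (0:ℝ) < Q := lt_of_lt_of_le one_pos hQ1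
    have key1 : ((N : ℝ) + 1) * frobM V ≤ K * (P * Q) := by
      calc ((N : ℝ) + 1) * frobM V ≤ ((N : ℝ) + 1) * Q := by
            apply mul_le_mul_of_nonneg_left _ (by positivity)
            exact le_trans hV hQt
        _ ≤ K * Q := by
            apply mul_le_mul_of_nonneg_right _ hQ0.le
            rw [hK]; nlinarith
        _ = K * (1 * Q) := by ring
        _ ≤ K * (P * Q) := by
            apply mul_le_mul_of_nonneg_left _ hK0.le
            exact mul_le_mul_of_nonneg_right hP1 hQ0.le
    have key2 : 2 * ((N : ℝ) + 1) * ((N : ℝ) + 2) * frobM V * frobM W * ‖Z‖ ^ 2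
        ≤ (2 * K) * (P * Q) := by
      have hvw : frobM V * frobM W ≤ t ^ 2 := by nlinarith [mul_le_mul hV hW hfW ht0]
      calc 2 * ((N : ℝ) + 1) * ((N : ℝ) + 2) * frobM V * frobM W * ‖Z‖ ^ 2
          = (2 * K) * ((frobM V * frobM W) * ‖Z‖ ^ 2) := by rw [hK]; ring
        _ ≤ (2 * K) * (Q * P) := by
            apply mul_le_mul_of_nonneg_left _ (by positivity)
            calc (frobM V * frobM W) * ‖Z‖ ^ 2 ≤ t ^ 2 * ‖Z‖ ^ 2 :=
                  mul_le_mul_of_nonneg_right hvw (sq_nonneg _)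
              _ ≤ Q * ‖Z‖ ^ 2 := mul_le_mul_of_nonneg_right hQt2 (sq_nonneg _)
              _ ≤ Q * P := mul_le_mul_of_nonneg_left hPz hQ0.le
        _ = (2 * K) * (P * Q) := by ring
    have hsum := add_le_add key1 key2
    have hPQ : (0:ℝ) ≤ P * Q := by positivity
    calc ((N : ℝ) + 1) * frobM V
          + 2 * ((N : ℝ) + 1) * ((N : ℝ) + 2) * frobM V * frobM W * ‖Z‖ ^ 2
        ≤ K * (P * Q) + (2 * K) * (P * Q) := hsum
      _ ≤ (3 * K + 1) * (P * Q) := by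
          have hexp : (3 * K + 1) * (P * Q) = K * (P * Q) + (2 * K) * (P * Q) + P * Q := by ring
          linarith [hPQ]
      _ = (3 * K + 1) * P * Q := by ring
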